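/- Let α_1, …, α_{N+N_r−1} be pairwise distinct nonzero elements of a field F, with V, G_n, G̃, S_n = V G_n^{-1} as above. Fix n ∈ {1,…,N}, a subset N' ⊆ {1,…,N} with |N'| = N_r, and vectors w ∈ F^{N_r} and q ∈ F^{N_r−1}. Define the message vector m ∈ F^{N'} by m_i = (V w)_i + (S_n G̃ q)_i for i ∈ N'. Then e_1ᵀ · (rows_{N'}(S_n))^{-1} · m = (V w)_n, where rows_{N'}(S_n) denotes the N_r × N_r submatrix of S_n with rows indexed by N', and e_1 is the first standard basis vector of F^{N_r}. -/

import Mathlib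

variable {F : Type} [Field F] {N r : ℕ}

/-- The `N × (r+1)` Vandermonde matrix `V` with nodes `α_1, …, α_N`. -/
def Vmat (α : Fin N → F) : Matrix (Fin N) (Fin (r + 1)) F :=
  Matrix.of fun i j => α i ^ (j : ℕ)

/-- The `(r+1) × (r+1)` Vandermonde matrix `G_n` with row nodes
`α_n, β_1, …, β_r` (where `β_i` plays the role of `α_{N+i}`). -/
def Gmat (α : Fin N → F) (β : Fin r → F) (n : Fin N) :
    Matrix (Fin (r + 1)) (Fin (r + 1)) F :=
  Matrix.of fun i j => ((Fin.cons (α n) β : Fin (r + 1) → F) i) ^ (j : ℕ)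

/-- The `(r+1) × r` matrix `G̃` whose first row is zero and whose row `i+1`
is the Vandermonde row `(1, β_i, …, β_i^{r-1})`. -/
def Gtil (β : Fin r → F) : Matrix (Fin (r + 1)) (Fin r) F :=
  Matrix.of fun i j => ((Fin.cons 0 (fun i' => β i' ^ (j : ℕ)) : Fin (r + 1) → F) i)

/-- The matrix `S_n = V · G_n⁻¹`. -/
noncomputable def Smat (α : Fin N → F) (β : Fin r → F) (n : Fin N) :
    Matrix (Fin N) (Fin (r + 1)) F :=
  Vmat α * (Gmat α β n)⁻¹

/-- Exact reconstruction of the missing message `(Vw)_n` from the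
masked shares `m_i = (Vw)_i + (S_n G̃ q)_i`, `i ∈ N'`, where `|N'| = N_r = r+1`:
`e_1ᵀ (rows_{N'}(S_n))⁻¹ m = (Vw)_n`. -/
theorem helper_reconstruction
    {F : Type} [Field F] (N r : ℕ) (hN : 1 ≤ N)
    (α : Fin N → F) (β : Fin r → F)
    (hinj : Function.Injective (Sum.elim α β))
    (h0 : ∀ x : Fin N ⊕ Fin r, Sum.elim α β x ≠ 0)
    (n : Fin N)
    (N' : Finset (Fin N)) (hN' : N'.card = r + 1)
    (w : Fin (r + 1) → F) (q : Fin r → F)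
    (m : Fin (r + 1) → F)
    (hm : ∀ i : Fin (r + 1),
      m i = (Vmat α).mulVec w ((N'.orderIsoOfFin hN' i : N') : Fin N)
          + (Smat α β n * Gtil β).mulVec q ((N'.orderIsoOfFin hN' i : N') : Fin N)) :
    (((Smat α β n).submatrix
        (fun i : Fin (r + 1) => ((N'.orderIsoOfFin hN' i : N') : Fin N)) id)⁻¹.mulVec m) 0
      = (Vmat α).mulVec w n := by
  classical
  set e : Fin (r + 1) → Fin N :=
    fun i => ((N'.orderIsoOfFin hN' i : N') : Fin N) with he
  have heinj : Function.Injective e := by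
    intro a b hab
    exact (N'.orderIsoOfFin hN').injective (Subtype.ext hab)
  have hα : Function.Injective α := fun a b hab => by
    have := hinj (a₁ := Sum.inl a) (a₂ := Sum.inl b) (by simpa using hab)
    exact Sum.inl.inj this
  have hg : Function.Injective (Fin.cons (Sum.inl n) Sum.inr : Fin (r + 1) → Fin N ⊕ Fin r) := by
    intro a b hab
    induction a using Fin.cases <;> induction b using Fin.cases <;>
      simp_all [Fin.succ_inj]
  have hcomp : (Fin.cons (α n) β : Fin (r + 1) → F)
      = Sum.elim α β ∘ (Fin.cons (Sum.inl n) Sum.inr : Fin (r + 1) → Fin N ⊕ Fin r) := by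
    funext i
    induction i using Fin.cases <;> simp
  have hconsinj : Function.Injective (Fin.cons (α n) β : Fin (r + 1) → F) := by
    rw [hcomp]; exact hinj.comp hg
  -- Gmat is the Vandermonde matrix with injective nodes, hence invertible
  have hGdet : (Gmat α β n : Matrix (Fin (r+1)) (Fin (r+1)) F).det ≠ 0 := by
    have : (Gmat α β n : Matrix (Fin (r+1)) (Fin (r+1)) F)
        = Matrix.vandermonde (Fin.cons (α n) β) := rfl
    rw [this, Matrix.det_vandermonde_ne_zero_iff]
    exact hconsinj
  -- the selected rows of Vmat form a Vandermonde matrix with injective nodes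
  have hVdet : ((Vmat α).submatrix e (id : Fin (r+1) → Fin (r+1))).det ≠ 0 := by
    have : ((Vmat α).submatrix e (id : Fin (r+1) → Fin (r+1)))
        = Matrix.vandermonde (fun i => α (e i)) := rfl
    rw [this, Matrix.det_vandermonde_ne_zero_iff]
    exact fun a b hab => heinj (hα hab)
  set T : Matrix (Fin (r+1)) (Fin (r+1)) F := (Smat α β n).submatrix e id with hT
  have hTeq : T = ((Vmat α).submatrix e (id : Fin (r+1) → Fin (r+1))) * (Gmat α β n)⁻¹ := by
    ext i j
    simp [hT, Smat, Matrix.mul_apply, Matrix.submatrix_apply]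
    rfl
  have hTdet : T.det ≠ 0 := by
    rw [hTeq, Matrix.det_mul, Matrix.det_nonsing_inv]
    exact mul_ne_zero hVdet (by rw [Ring.inverse_eq_inv]; exact inv_ne_zero hGdet)
  set u : Fin (r+1) → F := (Gmat α β n).mulVec w + (Gtil β).mulVec q with hu
  have hSG : Smat α β n * Gmat α β n = Vmat α := by
    rw [Smat]; exact Matrix.nonsing_inv_mul_cancel_right _ _ (isUnit_iff_ne_zero.mpr hGdet)
  have hmu : m = T.mulVec u := by
    funext i
    rw [hm i, hu]
    have : T.mulVec ((Gmat α β n).mulVec w + (Gtil β).mulVec q) i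
        = (Smat α β n).mulVec ((Gmat α β n).mulVec w + (Gtil β).mulVec q) (e i) := by
      simp [hT, Matrix.mulVec, Matrix.submatrix_apply, dotProduct]
    rw [this, Matrix.mulVec_add, Matrix.mulVec_mulVec, Matrix.mulVec_mulVec, hSG]
    rfl
  have hinv : T⁻¹.mulVec m = u := by
    rw [hmu, Matrix.mulVec_mulVec, Matrix.nonsing_inv_mul T (isUnit_iff_ne_zero.mpr hTdet), Matrix.one_mulVec]
  rw [hinv, hu]
  have h1 : (Gmat α β n).mulVec w 0 = (Vmat α).mulVec w n := by
    simp [Gmat, Vmat, Matrix.mulVec, dotProduct]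
  have h2 : (Gtil β).mulVec q 0 = 0 := by
    simp [Gtil, Matrix.mulVec, dotProduct]
  simp [h1, h2]
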